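/- Fix an integer K ≥ 1, a score function h : {1,…,K} → ℝ, a function f : {1,…,K} → ℝ, and let c be the Euler–Mascheroni constant. For each j let g_j(t) = exp(−((t + c − h(j)) + exp(−(t + c − h(j))))) be the Gumbel density with location h(j), and for each z let A_z = {t ∈ ℝ^K : t_z > t_j for all j ≠ z} be the event that coordinate z is the strict argmax. Then ∫_{ℝ^K} (∏_{j=1}^{K} g_j(t_j)) · (∑_{z=1}^{K} 1_{A_z}(t) · f(z)) dt = ∑_{z=1}^{K} (exp(h(z)) / ∑_{j=1}^{K} exp(h(j))) · f(z). That is, the expectation of f evaluated at the argmax of K independent Gumbel random variables with locations h(1),…,h(K) equals the expectation of f under the softmax distribution induced by h. -/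

import Mathlib

set_option maxHeartbeats 1000000
open MeasureTheory Real Finset

noncomputable def gumbelPdf (a t : ℝ) : ℝ :=
  Real.exp (-((t + Real.eulerMascheroniConstant - a) +
    Real.exp (-(t + Real.eulerMascheroniConstant - a))))

noncomputable def gumbelCdf (a t : ℝ) : ℝ :=
  Real.exp (-Real.exp (-(t + Real.eulerMascheroniConstant - a)))

lemma continuous_gumbelPdf (a : ℝ) : Continuous (gumbelPdf a) := by
  unfold gumbelPdf; fun_prop

lemma gumbelPdf_nonneg (a t : ℝ) : 0 ≤ gumbelPdf a t := (Real.exp_pos _).le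

lemma gumbelCdf_nonneg (a t : ℝ) : 0 ≤ gumbelCdf a t := (Real.exp_pos _).le

lemma gumbelCdf_le_one (a t : ℝ) : gumbelCdf a t ≤ 1 := by
  unfold gumbelCdf
  rw [show (1:ℝ) = Real.exp 0 by simp]
  exact Real.exp_le_exp.2 (by simp [Real.exp_nonneg])

lemma hasDerivAt_gumbelCdf (a t : ℝ) : HasDerivAt (gumbelCdf a) (gumbelPdf a t) t := by
  have h1 : HasDerivAt (fun t : ℝ => -(t + Real.eulerMascheroniConstant - a)) (-1) t := by
    simpa [Pi.neg_def] using ((hasDerivAt_id t).add_const Real.eulerMascheroniConstant |>.sub_const a).neg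
  have h2 := (Real.hasDerivAt_exp _).comp t h1
  have h3 := (Real.hasDerivAt_exp _).comp t h2.neg
  refine h3.congr_deriv ?_
  unfold gumbelPdf
  show rexp (-rexp (-(t + eulerMascheroniConstant - a))) * -(rexp (-(t + eulerMascheroniConstant - a)) * -1) = _
  rw [show -(rexp (-(t + eulerMascheroniConstant - a)) * -1) = rexp (-(t + eulerMascheroniConstant - a)) by ring,
    ← Real.exp_add]
  ring_nf

lemma tendsto_inner_atTop (a : ℝ) :
    Filter.Tendsto (fun t : ℝ => -(t + Real.eulerMascheroniConstant - a)) Filter.atBot Filter.atTop := by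
  have : Filter.Tendsto (fun t : ℝ => t + Real.eulerMascheroniConstant - a) Filter.atBot Filter.atBot :=
    Filter.tendsto_atBot_add_const_right _ _ (Filter.tendsto_atBot_add_const_right _ _ Filter.tendsto_id)
  exact Filter.tendsto_neg_atBot_atTop.comp this

lemma tendsto_inner_atBot (a : ℝ) :
    Filter.Tendsto (fun t : ℝ => -(t + Real.eulerMascheroniConstant - a)) Filter.atTop Filter.atBot := by
  have : Filter.Tendsto (fun t : ℝ => t + Real.eulerMascheroniConstant - a) Filter.atTop Filter.atTop :=
    Filter.tendsto_atTop_add_const_right _ _ (Filter.tendsto_atTop_add_const_right _ _ Filter.tendsto_id)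
  exact Filter.tendsto_neg_atTop_atBot.comp this

lemma tendsto_gumbelCdf_atTop (a : ℝ) : Filter.Tendsto (gumbelCdf a) Filter.atTop (nhds 1) := by
  have h2 := Real.tendsto_exp_atBot.comp (tendsto_inner_atBot a)
  have h3 : Filter.Tendsto (fun t : ℝ => -Real.exp (-(t + Real.eulerMascheroniConstant - a)))
      Filter.atTop (nhds 0) := by
    have := h2.neg
    simp only [Function.comp_def, neg_zero] at this
    convert this using 2 with t
  have h4 := (Real.continuous_exp.tendsto 0).comp h3
  simp only [Function.comp_def, Real.exp_zero] at h4
  exact h4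

lemma tendsto_gumbelCdf_atBot (a : ℝ) : Filter.Tendsto (gumbelCdf a) Filter.atBot (nhds 0) := by
  have h2 := (Real.tendsto_exp_atTop.comp (tendsto_inner_atTop a))
  have h4 := Real.tendsto_exp_atBot.comp (Filter.tendsto_neg_atTop_atBot.comp h2)
  simp only [Function.comp_def] at h4
  exact h4

lemma exp_ge_linear (t : ℝ) : 2*t - 3 ≤ Real.exp t := by
  nlinarith [Real.add_one_le_exp (t/2), Real.exp_pos (t/2),
    show Real.exp t = Real.exp (t/2) * Real.exp (t/2) by rw [← Real.exp_add]; ring_nf,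
    sq_nonneg (t/2 - 1)]

lemma integrable_gumbelPdf (a : ℝ) : Integrable (gumbelPdf a) := by
  rw [← integrableOn_univ, ← Set.Iic_union_Ioi (a := (0:ℝ)), integrableOn_union]
  constructor
  · apply Integrable.mono'
      (g := fun x => Real.exp (Real.eulerMascheroniConstant - a + 3) * Real.exp x)
    · exact (integrableOn_exp_Iic 0).const_mul _
    · exact (continuous_gumbelPdf a).aestronglyMeasurable.restrict
    · refine Filter.Eventually.of_forall fun x => ?_
      rw [Real.norm_of_nonneg (gumbelPdf_nonneg a x), ← Real.exp_add]
      unfold gumbelPdf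
      apply Real.exp_le_exp.2
      have := exp_ge_linear (-(x + Real.eulerMascheroniConstant - a))
      linarith
  · apply Integrable.mono'
      (g := fun x => Real.exp (a - Real.eulerMascheroniConstant) * Real.exp (-1 * x))
    · exact (exp_neg_integrableOn_Ioi (0:ℝ) one_pos).const_mul _
    · exact (continuous_gumbelPdf a).aestronglyMeasurable.restrict
    · refine Filter.Eventually.of_forall fun x => ?_
      rw [Real.norm_of_nonneg (gumbelPdf_nonneg a x), ← Real.exp_add]
      unfold gumbelPdf
      apply Real.exp_le_exp.2
      have := Real.exp_pos (-(x + Real.eulerMascheroniConstant - a))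
      linarith

lemma integral_gumbelPdf (a : ℝ) : ∫ x, gumbelPdf a x = 1 := by
  rw [integral_of_hasDerivAt_of_tendsto (hasDerivAt_gumbelCdf a) (integrable_gumbelPdf a)
    (tendsto_gumbelCdf_atBot a) (tendsto_gumbelCdf_atTop a)]
  norm_num

lemma integral_Iio_gumbelPdf (a x : ℝ) : ∫ u in Set.Iio x, gumbelPdf a u = gumbelCdf a x := by
  rw [← MeasureTheory.integral_Iic_eq_integral_Iio,
    integral_Iic_of_hasDerivAt_of_tendsto' (fun u _ => hasDerivAt_gumbelCdf a u)
      (integrable_gumbelPdf a).integrableOn (tendsto_gumbelCdf_atBot a)]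
  ring

lemma exp_shift (a x : ℝ) : Real.exp a * Real.exp (-(x + Real.eulerMascheroniConstant)) =
    Real.exp (-(x + Real.eulerMascheroniConstant - a)) := by
  rw [← Real.exp_add]; ring_nf

lemma gumbelPdf_eq (a x : ℝ) : gumbelPdf a x =
    (Real.exp a * Real.exp (-(x + Real.eulerMascheroniConstant))) *
      Real.exp (-(Real.exp a * Real.exp (-(x + Real.eulerMascheroniConstant)))) := by
  unfold gumbelPdf
  rw [exp_shift, ← Real.exp_add]
  ring_nf

lemma gumbelCdf_eq (a x : ℝ) : gumbelCdf a x =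
    Real.exp (-(Real.exp a * Real.exp (-(x + Real.eulerMascheroniConstant)))) := by
  unfold gumbelCdf
  rw [exp_shift]

lemma integral_aux (S : ℝ) (hS : 0 < S) :
    ∫ x : ℝ, Real.exp (-(x + Real.eulerMascheroniConstant)) *
      Real.exp (-(S * Real.exp (-(x + Real.eulerMascheroniConstant)))) = 1 / S := by
  have key : ∀ x : ℝ, Real.exp (-(x + Real.eulerMascheroniConstant)) *
      Real.exp (-(S * Real.exp (-(x + Real.eulerMascheroniConstant))))
        = (1/S) * gumbelPdf (Real.log S) x := by
    intro x
    rw [gumbelPdf_eq, Real.exp_log hS]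
    field_simp
  simp_rw [key]
  rw [integral_const_mul, integral_gumbelPdf, mul_one]

lemma integral_pdf_mul_prod_cdf {n : ℕ} (a : ℝ) (b : Fin n → ℝ) :
    ∫ x : ℝ, gumbelPdf a x * ∏ j, gumbelCdf (b j) x
      = Real.exp a / (Real.exp a + ∑ j, Real.exp (b j)) := by
  set S := Real.exp a + ∑ j, Real.exp (b j) with hSdef
  have hS : 0 < S := by positivity
  have key : ∀ x : ℝ, gumbelPdf a x * ∏ j, gumbelCdf (b j) x
      = Real.exp a * (Real.exp (-(x + Real.eulerMascheroniConstant)) *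
          Real.exp (-(S * Real.exp (-(x + Real.eulerMascheroniConstant))))) := by
    intro x
    set w := Real.exp (-(x + Real.eulerMascheroniConstant)) with hw
    have hprod : (∏ j, gumbelCdf (b j) x) = Real.exp (-((∑ j, Real.exp (b j)) * w)) := by
      simp_rw [gumbelCdf_eq, ← hw, ← Real.exp_sum]
      congr 1
      rw [Finset.sum_neg_distrib, ← Finset.sum_mul]
    rw [gumbelPdf_eq, ← hw, hprod, mul_assoc,
      show Real.exp (-(Real.exp a * w)) * Real.exp (-((∑ j, Real.exp (b j)) * w))
          = Real.exp (-(S * w)) by rw [← Real.exp_add]; congr 1; rw [hSdef]; ring]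
    ring
  simp_rw [key]
  rw [integral_const_mul, integral_aux S hS, mul_one_div]

lemma mem_argmax_iff {n : ℕ} (z : Fin (n+1)) (x : ℝ) (y : Fin n → ℝ) :
    z.insertNth x y ∈ {t : Fin (n+1) → ℝ | ∀ j, j ≠ z → t j < t z} ↔ ∀ j, y j < x := by
  simp only [Set.mem_setOf_eq, Fin.insertNth_apply_same]
  constructor
  · intro H j
    have := H (z.succAbove j) (Fin.succAbove_ne z j)
    rwa [Fin.insertNth_apply_succAbove] at this
  · intro H j hj
    obtain ⟨j', rfl⟩ := Fin.exists_succAbove_eq hj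
    rw [Fin.insertNth_apply_succAbove]
    exact H j'

lemma indicator_argmax {n : ℕ} (z : Fin (n+1)) (x : ℝ) (y : Fin n → ℝ) :
    Set.indicator {t : Fin (n+1) → ℝ | ∀ j, j ≠ z → t j < t z} (fun _ => (1:ℝ)) (z.insertNth x y)
      = ∏ j, Set.indicator (Set.Iio x) (fun _ => (1:ℝ)) (y j) := by
  by_cases hc : ∀ j, y j < x
  · rw [Set.indicator_of_mem ((mem_argmax_iff z x y).2 hc), Finset.prod_eq_one]
    intro j _
    rw [Set.indicator_of_mem (Set.mem_Iio.2 (hc j))]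
  · have hnot : z.insertNth x y ∉ {t : Fin (n+1) → ℝ | ∀ j, j ≠ z → t j < t z} := by
      rw [mem_argmax_iff]; exact hc
    push_neg at hc
    obtain ⟨j, hj⟩ := hc
    rw [Set.indicator_of_notMem hnot]
    rw [eq_comm]
    apply Finset.prod_eq_zero (Finset.mem_univ j)
    rw [Set.indicator_of_notMem (by simpa using hj)]

lemma argmax_prob {n : ℕ} (h : Fin (n+1) → ℝ) (z : Fin (n+1)) :
    ∫ t : Fin (n+1) → ℝ, (∏ j, gumbelPdf (h j) (t j)) *
        Set.indicator {t : Fin (n+1) → ℝ | ∀ j, j ≠ z → t j < t z} (fun _ => (1:ℝ)) t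
      = Real.exp (h z) / ∑ j, Real.exp (h j) := by
  have mp := (measurePreserving_piFinSuccAbove (fun _ : Fin (n+1) => (volume : Measure ℝ)) z).symm
  rw [volume_pi, ← mp.integral_comp']
  simp_rw [MeasurableEquiv.piFinSuccAbove_symm_apply, Fin.insertNthEquiv, Equiv.coe_fn_mk]
  have integrand_eq : ∀ (x : ℝ) (y : Fin n → ℝ),
      (∏ j, gumbelPdf (h j) ((z.insertNth x y : Fin (n+1) → ℝ) j)) *
        Set.indicator {t : Fin (n+1) → ℝ | ∀ j, j ≠ z → t j < t z} (fun _ => (1:ℝ))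
          (z.insertNth x y)
        = gumbelPdf (h z) x * ∏ j, (gumbelPdf (h (z.succAbove j)) (y j) *
            Set.indicator (Set.Iio x) (fun _ => (1:ℝ)) (y j)) := by
    intro x y
    rw [Fin.prod_univ_succAbove (fun j => gumbelPdf (h j) ((z.insertNth x y : Fin (n+1) → ℝ) j)) z,
      indicator_argmax, Finset.prod_mul_distrib]
    simp only [Fin.insertNth_apply_same, Fin.insertNth_apply_succAbove]
    ring
  simp_rw [integrand_eq]
  have hdom : Integrable (fun p : ℝ × (Fin n → ℝ) =>
      gumbelPdf (h z) p.1 * ∏ j, gumbelPdf (h (z.succAbove j)) (p.2 j))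
      (volume.prod (Measure.pi fun _ => volume)) :=
    Integrable.mul_prod (integrable_gumbelPdf _)
      (Integrable.fintype_prod fun j => integrable_gumbelPdf (h (z.succAbove j)))
  have hind_le : ∀ (x u : ℝ), (Set.Iio x).indicator (fun _ => (1:ℝ)) u ≤ 1 := by
    intro x u
    by_cases hu : u ∈ Set.Iio x <;> simp [hu]
  have hind_nonneg : ∀ (x u : ℝ), 0 ≤ (Set.Iio x).indicator (fun _ => (1:ℝ)) u :=
    fun x u => Set.indicator_nonneg (fun _ _ => zero_le_one) _
  have hmeas2 : AEStronglyMeasurable (fun p : ℝ × (Fin n → ℝ) =>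
      gumbelPdf (h z) p.1 * ∏ j, gumbelPdf (h (z.succAbove j)) (p.2 j) *
        (Set.Iio p.1).indicator (fun _ => (1:ℝ)) (p.2 j))
      (volume.prod (Measure.pi fun _ => volume)) := by
    apply Measurable.aestronglyMeasurable
    refine Measurable.mul ((continuous_gumbelPdf _).measurable.comp measurable_fst)
      (Finset.measurable_prod _ fun j _ => Measurable.mul
        ((continuous_gumbelPdf _).measurable.comp (measurable_snd.eval)) ?_)
    have heq : (fun p : ℝ × (Fin n → ℝ) => (Set.Iio p.1).indicator (fun _ => (1:ℝ)) (p.2 j))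
        = Set.indicator {p : ℝ × (Fin n → ℝ) | p.2 j < p.1} (fun _ => (1:ℝ)) := by
      funext p
      by_cases hp : p.2 j < p.1 <;>
        simp [Set.indicator_apply, Set.mem_Iio, Set.mem_setOf_eq, hp]
    rw [heq]
    exact measurable_const.indicator
      (measurableSet_lt measurable_snd.eval measurable_fst)
  have hint2 : Integrable (fun p : ℝ × (Fin n → ℝ) =>
      gumbelPdf (h z) p.1 * ∏ j, gumbelPdf (h (z.succAbove j)) (p.2 j) *
        (Set.Iio p.1).indicator (fun _ => (1:ℝ)) (p.2 j))
      (volume.prod (Measure.pi fun _ => volume)) := by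
    apply Integrable.mono' hdom hmeas2
    refine Filter.Eventually.of_forall fun p => ?_
    rw [Real.norm_eq_abs, abs_mul, abs_of_nonneg (gumbelPdf_nonneg _ _)]
    refine mul_le_mul_of_nonneg_left ?_ (gumbelPdf_nonneg _ _)
    rw [abs_of_nonneg (Finset.prod_nonneg fun j _ =>
      mul_nonneg (gumbelPdf_nonneg _ _) (hind_nonneg _ _))]
    refine Finset.prod_le_prod (fun j _ =>
      mul_nonneg (gumbelPdf_nonneg _ _) (hind_nonneg _ _)) (fun j _ => ?_)
    calc gumbelPdf (h (z.succAbove j)) (p.2 j) * (Set.Iio p.1).indicator (fun _ => (1:ℝ)) (p.2 j)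
        ≤ gumbelPdf (h (z.succAbove j)) (p.2 j) * 1 :=
          mul_le_mul_of_nonneg_left (hind_le _ _) (gumbelPdf_nonneg _ _)
      _ = gumbelPdf (h (z.succAbove j)) (p.2 j) := mul_one _
  rw [MeasureTheory.integral_prod _ hint2]
  have inner_eq : ∀ x : ℝ,
      (∫ y : Fin n → ℝ, gumbelPdf (h z) x * ∏ j, gumbelPdf (h (z.succAbove j)) (y j) *
        (Set.Iio x).indicator (fun _ => (1:ℝ)) (y j) ∂(Measure.pi fun _ => volume))
      = gumbelPdf (h z) x * ∏ j, gumbelCdf (h (z.succAbove j)) x := by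
    intro x
    rw [integral_const_mul]
    congr 1
    have hsplit : ∀ (j : Fin n) (u : ℝ),
        gumbelPdf (h (z.succAbove j)) u * (Set.Iio x).indicator (fun _ => (1:ℝ)) u
          = (Set.Iio x).indicator (gumbelPdf (h (z.succAbove j))) u := by
      intro j u
      by_cases hu : u ∈ Set.Iio x <;>
        simp [Set.indicator_of_mem, Set.indicator_of_notMem, hu]
    calc (∫ y : Fin n → ℝ, ∏ j, gumbelPdf (h (z.succAbove j)) (y j) *
          (Set.Iio x).indicator (fun _ => (1:ℝ)) (y j) ∂(Measure.pi fun _ => volume))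
        = ∏ j, ∫ u : ℝ, gumbelPdf (h (z.succAbove j)) u *
            (Set.Iio x).indicator (fun _ => (1:ℝ)) u := by
          rw [← volume_pi]
          exact integral_fintype_prod_eq_prod
            (fun j u => gumbelPdf (h (z.succAbove j)) u * (Set.Iio x).indicator (fun _ => (1:ℝ)) u)
      _ = ∏ j, gumbelCdf (h (z.succAbove j)) x := by
          refine Finset.prod_congr rfl fun j _ => ?_
          simp_rw [hsplit j]
          rw [integral_indicator measurableSet_Iio, integral_Iio_gumbelPdf]
  simp_rw [inner_eq]
  rw [integral_pdf_mul_prod_cdf (h z) (fun j => h (z.succAbove j))]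
  congr 1
  rw [Fin.sum_univ_succAbove (fun j => Real.exp (h j)) z]

/-- The expectation of `f` at the argmax of `K` independent Gumbel random variables with
locations `h 1, …, h K` equals the expectation of `f` under the softmax distribution
induced by `h`. -/
theorem stmt_15 (K : ℕ) (hK : 1 ≤ K) (h f : Fin K → ℝ) :
    (∫ t : Fin K → ℝ,
        (∏ j, gumbelPdf (h j) (t j)) *
          ∑ z, Set.indicator {t : Fin K → ℝ | ∀ j, j ≠ z → t j < t z} (fun _ => f z) t) =
      ∑ z, (Real.exp (h z) / ∑ j, Real.exp (h j)) * f z := by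
  obtain ⟨n, rfl⟩ : ∃ n, K = n + 1 := ⟨K - 1, (Nat.succ_pred_eq_of_pos hK).symm⟩
  have hmeas : ∀ z : Fin (n+1), MeasurableSet {t : Fin (n+1) → ℝ | ∀ j, j ≠ z → t j < t z} := by
    intro z
    have : {t : Fin (n+1) → ℝ | ∀ j, j ≠ z → t j < t z}
        = ⋂ j, ⋂ (_ : j ≠ z), {t : Fin (n+1) → ℝ | t j < t z} := by
      ext t; simp
    rw [this]
    exact MeasurableSet.iInter fun j => MeasurableSet.iInter fun _ =>
      measurableSet_lt (measurable_pi_apply j) (measurable_pi_apply z)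
  have hcont : Continuous fun t : Fin (n+1) → ℝ => ∏ j, gumbelPdf (h j) (t j) :=
    continuous_finset_prod _ fun j _ => (continuous_gumbelPdf (h j)).comp (continuous_apply j)
  have hprod_int : Integrable fun t : Fin (n+1) → ℝ => ∏ j, gumbelPdf (h j) (t j) :=
    Integrable.fintype_prod fun j => integrable_gumbelPdf (h j)
  have hterm_int : ∀ z : Fin (n+1), Integrable fun t : Fin (n+1) → ℝ =>
      (∏ j, gumbelPdf (h j) (t j)) *
        Set.indicator {t : Fin (n+1) → ℝ | ∀ j, j ≠ z → t j < t z} (fun _ => f z) t := by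
    intro z
    apply Integrable.mono' (hprod_int.mul_const |f z|)
    · exact hcont.aestronglyMeasurable.mul
        (measurable_const.indicator (hmeas z)).aestronglyMeasurable
    · refine Filter.Eventually.of_forall fun t => ?_
      rw [norm_mul, Real.norm_eq_abs,
        abs_of_nonneg (Finset.prod_nonneg fun j _ => gumbelPdf_nonneg _ _)]
      refine mul_le_mul_of_nonneg_left ?_
        (Finset.prod_nonneg fun j _ => gumbelPdf_nonneg _ _)
      rw [Real.norm_eq_abs]
      by_cases ht : t ∈ {t : Fin (n+1) → ℝ | ∀ j, j ≠ z → t j < t z} <;>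
        simp [Set.indicator_apply, ht, abs_nonneg]
  simp_rw [Finset.mul_sum]
  rw [integral_finset_sum _ fun z _ => hterm_int z]
  refine Finset.sum_congr rfl fun z _ => ?_
  have hswap : (fun t : Fin (n+1) → ℝ =>
      (∏ j, gumbelPdf (h j) (t j)) *
        Set.indicator {t : Fin (n+1) → ℝ | ∀ j, j ≠ z → t j < t z} (fun _ => f z) t)
      = fun t : Fin (n+1) → ℝ => f z * ((∏ j, gumbelPdf (h j) (t j)) *
        Set.indicator {t : Fin (n+1) → ℝ | ∀ j, j ≠ z → t j < t z} (fun _ => (1:ℝ)) t) := by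
    funext t
    by_cases ht : t ∈ {t : Fin (n+1) → ℝ | ∀ j, j ≠ z → t j < t z} <;>
      simp [Set.indicator_apply, ht] <;> ring
  rw [hswap, integral_const_mul, argmax_prob h z]
  ring
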